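/- For a standard Gaussian random variable N and every x ∈ ℝ, lim_{r→∞} P(N > r + e^{-x}/r) / P(N > r) = exp(-e^{-x}). Equivalently, the conditional law of -ln(N - r) - ln r given N > r converges to the Gumbel distribution: lim_{r→∞} P(-ln(N - r) - ln r ≤ x | N > r) = Λ(x) for all x. -/

import Mathlib

open MeasureTheory ProbabilityTheory Filter Real

section GumbelAux
open Set

noncomputable def gtail (r : ℝ) : ℝ := ∫ t in Ioi r, rexp (-t^2/2)

lemma gauss_integrableOn (r : ℝ) : IntegrableOn (fun t => rexp (-t^2/2)) (Ioi r) := by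
  have h : (fun t : ℝ => rexp (-t^2/2)) = fun t : ℝ => rexp (-(1/2) * t^2) := by
    ext t; ring_nf
  rw [h]
  exact (integrable_exp_neg_mul_sq (by norm_num)).integrableOn

lemma gauss_hasDerivAt (t : ℝ) : HasDerivAt (fun u : ℝ => rexp (-u^2/2)) (-t * rexp (-t^2/2)) t := by
  have h1 : HasDerivAt (fun u : ℝ => -u^2/2) (-t) t := by
    have := ((hasDerivAt_pow 2 t).neg).div_const 2
    simpa using this.congr_deriv (by ring)
  simpa [mul_comm] using h1.exp

lemma gauss_tendsto_zero : Tendsto (fun t : ℝ => rexp (-t^2/2)) atTop (nhds 0) := by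
  apply Real.tendsto_exp_atBot.comp
  have h : Tendsto (fun t : ℝ => t^2/2) atTop atTop :=
    (tendsto_pow_atTop (by norm_num)).atTop_div_const (by norm_num)
  exact (tendsto_neg_atTop_atBot.comp h).congr (fun t => by simp [Function.comp]; ring)

lemma mills_upper {r : ℝ} (hr : 0 < r) : gtail r ≤ rexp (-r^2/2) / r := by
  have hderiv : ∀ t ∈ Ici r, HasDerivAt (fun u : ℝ => -(rexp (-u^2/2) / u))
      (rexp (-t^2/2) * (1 + 1/t^2)) t := by
    intro t ht
    have htpos : (0:ℝ) < t := lt_of_lt_of_le hr ht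
    have h := ((gauss_hasDerivAt t).div (hasDerivAt_id t) htpos.ne').neg
    refine h.congr_deriv ?_
    simp only [id]
    field_simp
    ring
  have hmeas : Measurable (fun t : ℝ => rexp (-t^2/2) * (1 + 1/t^2)) := by
    fun_prop
  have hint : IntegrableOn (fun t => rexp (-t^2/2) * (1 + 1/t^2)) (Ioi r) := by
    apply Integrable.mono ((gauss_integrableOn r).const_mul (1 + 1/r^2))
      hmeas.aestronglyMeasurable
    filter_upwards [ae_restrict_mem measurableSet_Ioi] with t ht
    have htpos : (0:ℝ) < t := hr.trans ht
    have h2 : 1/t^2 ≤ 1/r^2 := by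
      apply one_div_le_one_div_of_le (by positivity)
      exact pow_le_pow_left₀ hr.le (le_of_lt ht) 2
    rw [Real.norm_eq_abs, Real.norm_eq_abs, abs_of_pos (by positivity), abs_of_pos (by positivity)]
    nlinarith [exp_pos (-t^2/2)]
  have heq := integral_Ioi_of_hasDerivAt_of_tendsto' hderiv hint
      (by simpa using (gauss_tendsto_zero.div_atTop tendsto_id).neg)
  simp only [zero_sub, neg_neg] at heq
  calc gtail r ≤ ∫ t in Ioi r, rexp (-t^2/2) * (1 + 1/t^2) := by
        apply setIntegral_mono_on (gauss_integrableOn r) hint measurableSet_Ioi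
        intro t ht
        nlinarith [exp_pos (-t^2/2), mul_nonneg (exp_pos (-t^2/2)).le
          (by positivity : (0:ℝ) ≤ 1/t^2)]
      _ = rexp (-r^2/2) / r := heq

lemma mills_lower {r : ℝ} (hr : 0 < r) : rexp (-r^2/2) * (1/r - 1/r^3) ≤ gtail r := by
  have hderiv : ∀ t ∈ Ici r, HasDerivAt (fun u : ℝ => -(rexp (-u^2/2) * (1/u - 1/u^3)))
      (rexp (-t^2/2) * (1 - 3/t^4)) t := by
    intro t ht
    have htpos : (0:ℝ) < t := lt_of_lt_of_le hr ht
    have h1 : HasDerivAt (fun u : ℝ => 1/u - 1/u^3)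
        (-(1/t^2) - (-(3*t^2/(t^3)^2))) t := by
      have ha : HasDerivAt (fun u : ℝ => 1/u) (-(1/t^2)) t := by
        simpa [one_div] using hasDerivAt_inv htpos.ne'
      have hb : HasDerivAt (fun u : ℝ => 1/u^3) (-(3*t^2/(t^3)^2)) t := by
        have := (hasDerivAt_pow 3 t).inv (by positivity)
        simp only [one_div]; exact this.congr_deriv (by ring)
      exact ha.sub hb
    have h := ((gauss_hasDerivAt t).mul h1).neg
    refine h.congr_deriv ?_
    field_simp
    ring
  have hmeas : Measurable (fun t : ℝ => rexp (-t^2/2) * (1 - 3/t^4)) := by fun_prop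
  have hint : IntegrableOn (fun t => rexp (-t^2/2) * (1 - 3/t^4)) (Ioi r) := by
    apply Integrable.mono ((gauss_integrableOn r).const_mul (1 + 3/r^4))
      hmeas.aestronglyMeasurable
    filter_upwards [ae_restrict_mem measurableSet_Ioi] with t ht
    have htpos : (0:ℝ) < t := hr.trans ht
    have h2 : 3/t^4 ≤ 3/r^4 := by
      apply div_le_div_of_nonneg_left (by norm_num) (by positivity)
      exact pow_le_pow_left₀ hr.le (le_of_lt ht) 4
    have h3 : (0:ℝ) < 3/t^4 := by positivity
    rw [Real.norm_eq_abs, Real.norm_eq_abs, abs_mul, abs_mul, abs_of_pos (exp_pos _),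
      abs_of_pos (by positivity : (0:ℝ) < 1 + 3/r^4)]
    have h4 : |1 - 3/t^4| ≤ 1 + 3/r^4 := abs_le.mpr ⟨by linarith, by linarith⟩
    nlinarith [exp_pos (-t^2/2), abs_nonneg (1 - 3/t^4)]
  have htend : Tendsto (fun t : ℝ => -(rexp (-t^2/2) * (1/t - 1/t^3))) atTop (nhds 0) := by
    have h1 : Tendsto (fun t : ℝ => 1/t - 1/t^3) atTop (nhds 0) := by
      have ha : Tendsto (fun t : ℝ => 1/t) atTop (nhds 0) := by
        simpa [one_div] using tendsto_inv_atTop_zero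
      have hb : Tendsto (fun t : ℝ => 1/t^3) atTop (nhds 0) :=
        tendsto_const_nhds.div_atTop (tendsto_pow_atTop (by norm_num))
      simpa using ha.sub hb
    simpa using (gauss_tendsto_zero.mul h1).neg
  have heq := integral_Ioi_of_hasDerivAt_of_tendsto' hderiv hint htend
  simp only [zero_sub, neg_neg] at heq
  calc rexp (-r^2/2) * (1/r - 1/r^3) = ∫ t in Ioi r, rexp (-t^2/2) * (1 - 3/t^4) := heq.symm
    _ ≤ gtail r := by
        apply setIntegral_mono_on hint (gauss_integrableOn r) measurableSet_Ioi
        intro t ht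
        have htpos : (0:ℝ) < t := hr.trans ht
        nlinarith [exp_pos (-t^2/2), mul_nonneg (exp_pos (-t^2/2)).le
          (by positivity : (0:ℝ) ≤ 3/t^4)]

lemma lt_cube {r : ℝ} (hr : 1 < r) : r < r^3 := by
  have h0 : (0:ℝ) < r := by linarith
  nlinarith [mul_pos h0 (show (0:ℝ) < r^2 - 1 by nlinarith)]

lemma gtail_pos {r : ℝ} (hr : 1 < r) : 0 < gtail r := by
  have h1 : 1/r^3 < 1/r := one_div_lt_one_div_of_lt (by linarith) (lt_cube hr)
  have := mills_lower (by linarith : (0:ℝ) < r)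
  nlinarith [exp_pos (-r^2/2), mul_pos (exp_pos (-r^2/2)) (by linarith : (0:ℝ) < 1/r - 1/r^3)]

lemma aux_div_sq_tendsto (c : ℝ) : Tendsto (fun r : ℝ => c / r^2) atTop (nhds 0) :=
  tendsto_const_nhds.div_atTop (tendsto_pow_atTop (by norm_num))

lemma gauss_ratio_tendsto (c : ℝ) (hc : 0 < c) :
    Tendsto (fun r : ℝ => gtail (r + c/r) / gtail r) atTop (nhds (rexp (-c))) := by
  have hE : Tendsto (fun r : ℝ => rexp ((r^2 - (r + c/r)^2)/2)) atTop (nhds (rexp (-c))) := by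
    have harg : Tendsto (fun r : ℝ => (r^2 - (r + c/r)^2)/2) atTop (nhds (-c)) := by
      have h0 : Tendsto (fun r : ℝ => -c - c^2/2 / r^2) atTop (nhds (-c)) := by
        simpa using tendsto_const_nhds.sub (aux_div_sq_tendsto (c^2/2))
      apply h0.congr' ?_
      filter_upwards [eventually_gt_atTop 0] with r hr
      field_simp
      ring
    exact (Real.continuous_exp.tendsto _).comp harg
  have hsr : Tendsto (fun r : ℝ => (r + c/r)/r) atTop (nhds 1) := by
    have h0 : Tendsto (fun r : ℝ => 1 + c / r^2) atTop (nhds 1) := by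
      simpa using tendsto_const_nhds.add (aux_div_sq_tendsto c)
    apply h0.congr' ?_
    filter_upwards [eventually_gt_atTop 0] with r hr
    field_simp
  have hq : Tendsto (fun r : ℝ => r/(r + c/r)) atTop (nhds 1) := by
    have := hsr.inv₀ one_ne_zero
    simp only [inv_one] at this
    apply this.congr' ?_
    filter_upwards [eventually_gt_atTop 0] with r hr
    simp [one_div]
  have hq3 : Tendsto (fun r : ℝ => r/(r + c/r)^3) atTop (nhds 0) := by
    have h0 := (hq.pow 3).mul (aux_div_sq_tendsto 1)
    simp only [one_pow, mul_zero] at h0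
    apply h0.congr' ?_
    filter_upwards [eventually_gt_atTop 0] with r hr
    have hs : (0:ℝ) < r + c/r := by positivity
    field_simp
  have hs3 : Tendsto (fun r : ℝ => (r + c/r)/r^3) atTop (nhds 0) := by
    have h0 := hsr.mul (aux_div_sq_tendsto 1)
    simp only [one_mul, mul_zero] at h0
    apply h0.congr' ?_
    filter_upwards [eventually_gt_atTop 0] with r hr
    show (r + c/r)/r * (1/r^2) = (r + c/r)/r^3
    rw [div_mul_div_comm, mul_one]
    congr 1
    ring
  have hL : Tendsto (fun r : ℝ => rexp ((r^2 - (r + c/r)^2)/2) * (r/(r + c/r) - r/(r + c/r)^3))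
      atTop (nhds (rexp (-c))) := by
    have := hE.mul (hq.sub hq3)
    simpa using this
  have hU : Tendsto (fun r : ℝ => rexp ((r^2 - (r + c/r)^2)/2) / ((r + c/r)/r - (r + c/r)/r^3))
      atTop (nhds (rexp (-c))) := by
    have := hE.div (hsr.sub hs3) (by norm_num)
    simpa [Pi.div_def] using this
  apply tendsto_of_tendsto_of_tendsto_of_le_of_le' hL hU
  · filter_upwards [eventually_ge_atTop 2] with r hr
    have hr0 : (0:ℝ) < r := by linarith
    have hr1 : (1:ℝ) < r := by linarith
    set s := r + c/r with hs_def
    have hs0 : (0:ℝ) < s := by positivity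
    have hrs : r ≤ s := by
      rw [hs_def]
      exact le_add_of_nonneg_right (by positivity)
    have hs1 : (1:ℝ) < s := lt_of_lt_of_le hr1 hrs
    have hEeq : rexp ((r^2 - s^2)/2) = rexp (-s^2/2) / rexp (-r^2/2) := by
      rw [← Real.exp_sub]; ring_nf
    have key : rexp ((r^2 - s^2)/2) * (r/s - r/s^3)
        = (rexp (-s^2/2) * (1/s - 1/s^3)) / (rexp (-r^2/2) / r) := by
      rw [hEeq]
      field_simp
    rw [key]
    exact div_le_div₀ (gtail_pos hs1).le (mills_lower hs0) (gtail_pos hr1) (mills_upper hr0)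
  · filter_upwards [eventually_ge_atTop 2] with r hr
    have hr0 : (0:ℝ) < r := by linarith
    have hr1 : (1:ℝ) < r := by linarith
    set s := r + c/r with hs_def
    have hs0 : (0:ℝ) < s := by positivity
    have hrs : r ≤ s := by
      rw [hs_def]
      exact le_add_of_nonneg_right (by positivity)
    have hs1 : (1:ℝ) < s := lt_of_lt_of_le hr1 hrs
    have hEeq : rexp ((r^2 - s^2)/2) = rexp (-s^2/2) / rexp (-r^2/2) := by
      rw [← Real.exp_sub]; ring_nf
    have hlr : 0 < rexp (-r^2/2) * (1/r - 1/r^3) := by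
      have h1 : 1/r^3 < 1/r := one_div_lt_one_div_of_lt (by linarith) (lt_cube hr1)
      exact mul_pos (exp_pos _) (by linarith)
    have key : rexp ((r^2 - s^2)/2) / (s/r - s/r^3)
        = (rexp (-s^2/2) / s) / (rexp (-r^2/2) * (1/r - 1/r^3)) := by
      rw [hEeq]
      rw [div_eq_div_iff]
      · field_simp
      · exact ne_of_gt (sub_pos.mpr (div_lt_div_of_pos_left hs0 hr0 (lt_cube hr1)))
      · positivity
    rw [key]
    exact div_le_div₀ (by positivity) (mills_upper hs0) hlr (mills_lower hr0)

lemma gaussian_noAtoms : ∀ a : ℝ, (gaussianReal 0 1) {a} = 0 := fun a =>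
  (gaussianReal_absolutelyContinuous 0 one_ne_zero) (measure_singleton a)

lemma prob_tail {Ω : Type*} [MeasureSpace Ω] [IsProbabilityMeasure (ℙ : Measure Ω)]
    {N : Ω → ℝ} (hN : Measure.map N ℙ = gaussianReal 0 1) (a : ℝ) :
    (ℙ {ω | N ω > a}).toReal = (Real.sqrt (2*π))⁻¹ * gtail a := by
  have hmN : AEMeasurable N ℙ := aemeasurable_of_map_neZero (by
    rw [hN]; exact ⟨IsProbabilityMeasure.ne_zero _⟩)
  have h1 : {ω | N ω > a} = N ⁻¹' (Ioi a) := rfl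
  rw [h1, ← Measure.map_apply_of_aemeasurable hmN measurableSet_Ioi, hN,
    gaussianReal_apply_eq_integral 0 one_ne_zero,
    ENNReal.toReal_ofReal (setIntegral_nonneg measurableSet_Ioi
      (fun t _ => gaussianPDFReal_nonneg 0 1 t))]
  have h2 : ∀ t : ℝ, gaussianPDFReal 0 1 t
      = (Real.sqrt (2*π))⁻¹ * rexp (-t^2/2) := by
    intro t
    simp [gaussianPDFReal]
  simp_rw [h2]
  rw [MeasureTheory.integral_const_mul]
  rfl

lemma prob_tail_ge {Ω : Type*} [MeasureSpace Ω] [IsProbabilityMeasure (ℙ : Measure Ω)]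
    {N : Ω → ℝ} (hN : Measure.map N ℙ = gaussianReal 0 1) (a : ℝ) :
    (ℙ {ω | a ≤ N ω}).toReal = (Real.sqrt (2*π))⁻¹ * gtail a := by
  have hmN : AEMeasurable N ℙ := aemeasurable_of_map_neZero (by
    rw [hN]; exact ⟨IsProbabilityMeasure.ne_zero _⟩)
  have h1 : {ω | a ≤ N ω} = N ⁻¹' (Ici a) := rfl
  have h2 : (gaussianReal 0 1) (Ici a)
      = (gaussianReal 0 1) (Ioi a) := by
    rw [← Set.Ioi_insert, Set.insert_eq]
    refine le_antisymm ?_ (measure_mono Set.subset_union_right)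
    calc (gaussianReal 0 1) ({a} ∪ Ioi a) ≤ (gaussianReal 0 1) {a} + (gaussianReal 0 1) (Ioi a) :=
          measure_union_le _ _
      _ = (gaussianReal 0 1) (Ioi a) := by rw [gaussian_noAtoms a, zero_add]
  rw [h1, ← Measure.map_apply_of_aemeasurable hmN measurableSet_Ici, hN, h2,
    gaussianReal_apply_eq_integral 0 one_ne_zero,
    ENNReal.toReal_ofReal (setIntegral_nonneg measurableSet_Ioi
      (fun t _ => gaussianPDFReal_nonneg 0 1 t))]
  have h3 : ∀ t : ℝ, gaussianPDFReal 0 1 t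
      = (Real.sqrt (2*π))⁻¹ * rexp (-t^2/2) := by
    intro t
    simp [gaussianPDFReal]
  simp_rw [h3]
  rw [MeasureTheory.integral_const_mul]
  rfl


end GumbelAux

/-- For a standard Gaussian `N`:
`P(N > r + e^{-x}/r)/P(N > r) → exp(-e^{-x})` as `r → ∞`; equivalently the
conditional law of `-ln(N - r) - ln r` given `N > r` converges to the Gumbel
distribution `Λ(x) = e^{-e^{-x}}`. -/
theorem gaussian_conditional_gumbel_limit
    {Ω : Type*} [MeasureSpace Ω] [IsProbabilityMeasure (ℙ : Measure Ω)]
    (N : Ω → ℝ) (hN : Measure.map N ℙ = gaussianReal 0 1) (x : ℝ) :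
    Tendsto (fun r : ℝ =>
        (ℙ {ω | N ω > r + Real.exp (-x) / r}).toReal / (ℙ {ω | N ω > r}).toReal)
      atTop (nhds (Real.exp (-Real.exp (-x)))) ∧
    Tendsto (fun r : ℝ =>
        (ℙ {ω | N ω > r ∧ -Real.log (N ω - r) - Real.log r ≤ x}).toReal /
          (ℙ {ω | N ω > r}).toReal)
      atTop (nhds (Real.exp (-Real.exp (-x)))) := by
  have hc : 0 < Real.exp (-x) := exp_pos _
  have hK : (Real.sqrt (2*π))⁻¹ ≠ 0 := by positivity
  have h1 : Tendsto (fun r : ℝ =>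
      (ℙ {ω | N ω > r + Real.exp (-x) / r}).toReal / (ℙ {ω | N ω > r}).toReal)
      atTop (nhds (Real.exp (-Real.exp (-x)))) := by
    apply (gauss_ratio_tendsto (Real.exp (-x)) hc).congr
    intro r
    rw [prob_tail hN, prob_tail hN, mul_div_mul_left _ _ hK]
  refine ⟨h1, Tendsto.congr' ?_ h1⟩
  filter_upwards [eventually_gt_atTop 0] with r hr
  have hset : {ω | N ω > r ∧ -Real.log (N ω - r) - Real.log r ≤ x}
      = {ω | r + Real.exp (-x) / r ≤ N ω} := by
    ext ω
    simp only [Set.mem_setOf_eq]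
    constructor
    · rintro ⟨h1', h2'⟩
      have hpos : 0 < N ω - r := sub_pos.mpr h1'
      have hlog : -x ≤ Real.log ((N ω - r) * r) := by
        rw [Real.log_mul (ne_of_gt hpos) (ne_of_gt hr)]
        linarith
      have h2 := (Real.le_log_iff_exp_le (by positivity)).mp hlog
      have h3 : Real.exp (-x) / r ≤ N ω - r := (div_le_iff₀ hr).mpr (by linarith)
      linarith
    · intro h
      have hgt : r < N ω := lt_of_lt_of_le (lt_add_of_pos_right r (by positivity)) h
      have hpos : 0 < N ω - r := sub_pos.mpr hgt
      have h3 : Real.exp (-x) ≤ (N ω - r) * r := by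
        have := (div_le_iff₀ hr).mp (by linarith : Real.exp (-x) / r ≤ N ω - r)
        linarith
      have hlog := (Real.le_log_iff_exp_le (by positivity)).mpr h3
      rw [Real.log_mul (ne_of_gt hpos) (ne_of_gt hr)] at hlog
      exact ⟨hgt, by linarith⟩
  show _ = _
  rw [hset, prob_tail hN, prob_tail_ge hN]
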